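/- Let g₁, …, gₙ ∈ ℝ, let ḡ = (1/n)Σᵢ gᵢ and s = √((1/n)Σᵢ (gᵢ − ḡ)²), and let ρ ≥ 0. Suppose that √ρ · (ḡ − gᵢ) ≤ s for every i ∈ {1,…,n}. Then the supremum of Σᵢ pᵢ gᵢ over all probability vectors p ∈ Δₙ satisfying (1/n)Σᵢ (n pᵢ − 1)² ≤ ρ is attained and equals ḡ + √ρ · s. -/

import Mathlib

open scoped BigOperators

/-- **Exact finite-sample closed form of the χ²-distributionally robust average.**
Let `g₁, …, gₙ ∈ ℝ`, `ḡ = (1/n)Σᵢ gᵢ`, `s = √((1/n)Σᵢ (gᵢ − ḡ)²)`, and `ρ ≥ 0`.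
If `√ρ · (ḡ − gᵢ) ≤ s` for every `i`, then the supremum of `Σᵢ pᵢ gᵢ` over all
probability vectors `p` in the simplex with `(1/n)Σᵢ (n pᵢ − 1)² ≤ ρ` is attained
and equals `ḡ + √ρ · s`. -/
theorem robust_average_closed_form (n : ℕ) (hn : 0 < n) (g : Fin n → ℝ)
    (ρ : ℝ) (hρ : 0 ≤ ρ) (gbar s : ℝ)
    (hgbar : gbar = (1 / (n : ℝ)) * ∑ i, g i)
    (hs : s = Real.sqrt ((1 / (n : ℝ)) * ∑ i, (g i - gbar) ^ 2))
    (hcond : ∀ i, Real.sqrt ρ * (gbar - g i) ≤ s) :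
    IsGreatest
      {x : ℝ | ∃ p : Fin n → ℝ, (∀ i, 0 ≤ p i) ∧ (∑ i, p i) = 1 ∧
        (1 / (n : ℝ)) * ∑ i, ((n : ℝ) * p i - 1) ^ 2 ≤ ρ ∧ x = ∑ i, p i * g i}
      (gbar + Real.sqrt ρ * s) := by
  have hN : (0:ℝ) < (n:ℝ) := by exact_mod_cast hn
  have hN0 : (n:ℝ) ≠ 0 := ne_of_gt hN
  set V : ℝ := ∑ i, (g i - gbar) ^ 2 with hVdef
  have hV0 : 0 ≤ V := Finset.sum_nonneg fun i _ => sq_nonneg _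
  have hs0 : 0 ≤ s := hs ▸ Real.sqrt_nonneg _
  have hsq : s ^ 2 = (1 / (n:ℝ)) * V := by
    rw [hs, Real.sq_sqrt]
    positivity
  have hVs : V = (n:ℝ) * s ^ 2 := by
    rw [hsq]; field_simp
  have hsum : ∑ i, g i = (n:ℝ) * gbar := by
    rw [hgbar]; field_simp
  have hdev : ∑ i, (g i - gbar) = 0 := by
    rw [Finset.sum_sub_distrib, hsum, Finset.sum_const, Finset.card_univ,
      Fintype.card_fin, nsmul_eq_mul]
    ring
  constructor
  · -- membership
    rcases eq_or_lt_of_le hs0 with hse | hsp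
    · -- s = 0 : all deviations are 0, uniform works
      have hs' : s = 0 := hse.symm
      have hVzero : V = 0 := by rw [hVs, hs']; ring
      refine ⟨fun _ => 1 / (n:ℝ), fun i => by positivity, ?_, ?_, ?_⟩
      · rw [Finset.sum_const, Finset.card_univ, Fintype.card_fin, nsmul_eq_mul]
        field_simp
      · have : ∀ i ∈ (Finset.univ : Finset (Fin n)), ((n:ℝ) * (1 / (n:ℝ)) - 1) ^ 2 = 0 := by
          intro i _; field_simp; norm_num
        rw [Finset.sum_congr rfl this, Finset.sum_const, smul_zero]
        simpa using hρ
      · have hgi : ∀ i ∈ Finset.univ, (g i - gbar) ^ 2 = 0 := by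
          intro i _
          have := (Finset.sum_eq_zero_iff_of_nonneg
            (fun i _ => sq_nonneg (g i - gbar))).mp hVzero i (Finset.mem_univ i)
          exact this
        have hgg : ∀ i, g i = gbar := by
          intro i
          have := hgi i (Finset.mem_univ i)
          have := pow_eq_zero_iff (n := 2) (by norm_num) |>.mp this
          linarith
        rw [hs']
        simp only [hgg, mul_zero, add_zero]
        rw [Finset.sum_const, Finset.card_univ, Fintype.card_fin, nsmul_eq_mul]
        field_simp
    · -- s > 0
      set p : Fin n → ℝ := fun i => 1 / (n:ℝ) + Real.sqrt ρ * (g i - gbar) / ((n:ℝ) * s)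
        with hp
      have hNs : (0:ℝ) < (n:ℝ) * s := by positivity
      refine ⟨p, ?_, ?_, ?_, ?_⟩
      · intro i
        have h := hcond i
        have : -s ≤ Real.sqrt ρ * (g i - gbar) := by nlinarith
        have : -(1 / (n:ℝ)) ≤ Real.sqrt ρ * (g i - gbar) / ((n:ℝ) * s) := by
          rw [le_div_iff₀ hNs]
          calc -(1 / (n:ℝ)) * ((n:ℝ) * s) = -s := by field_simp
            _ ≤ _ := this
        simp only [hp]
        linarith
      · simp only [hp]
        rw [Finset.sum_add_distrib, Finset.sum_const, Finset.card_univ, Fintype.card_fin,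
          nsmul_eq_mul]
        have : ∑ i, Real.sqrt ρ * (g i - gbar) / ((n:ℝ) * s)
            = (Real.sqrt ρ / ((n:ℝ) * s)) * ∑ i, (g i - gbar) := by
          rw [Finset.mul_sum]; apply Finset.sum_congr rfl; intro i _; ring
        rw [this, hdev]
        field_simp
        ring
      · have hterm : ∀ i ∈ Finset.univ, ((n:ℝ) * p i - 1) ^ 2
            = ρ / s ^ 2 * (g i - gbar) ^ 2 := by
          intro i _
          have : (n:ℝ) * p i - 1 = Real.sqrt ρ * (g i - gbar) / s := by
            simp only [hp]; field_simp; ring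
          rw [this, div_pow, mul_pow, Real.sq_sqrt hρ]
          ring
        rw [Finset.sum_congr rfl hterm, ← Finset.mul_sum, ← hVdef, hVs]
        have hs2 : s ^ 2 ≠ 0 := by positivity
        field_simp
        exact le_rfl
      · have : ∀ i ∈ Finset.univ, p i * g i
            = (1 / (n:ℝ)) * g i + (Real.sqrt ρ / ((n:ℝ) * s)) * ((g i - gbar) * g i) := by
          intro i _; simp only [hp]; ring
        rw [Finset.sum_congr rfl this, Finset.sum_add_distrib, ← Finset.mul_sum,
          ← Finset.mul_sum, ← hgbar]
        have hgg : ∑ i, (g i - gbar) * g i = V := by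
          have : ∀ i ∈ Finset.univ, (g i - gbar) * g i
              = (g i - gbar) ^ 2 + gbar * (g i - gbar) := by intro i _; ring
          rw [Finset.sum_congr rfl this, Finset.sum_add_distrib, ← Finset.mul_sum, hdev,
            mul_zero, add_zero]
        rw [hgg, hVs]
        have : Real.sqrt ρ / ((n:ℝ) * s) * ((n:ℝ) * s ^ 2) = Real.sqrt ρ * s := by
          field_simp
        rw [this]
  · -- upper bound
    rintro x ⟨p, hp0, hp1, hp2, hx⟩
    have hdiff : x - gbar = ∑ i, (p i - 1 / (n:ℝ)) * (g i - gbar) := by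
      have : ∀ i ∈ Finset.univ, (p i - 1 / (n:ℝ)) * (g i - gbar)
          = p i * g i - gbar * p i - (1 / (n:ℝ)) * g i + gbar * (1 / (n:ℝ)) := by
        intro i _; ring
      rw [Finset.sum_congr rfl this]
      simp only [Finset.sum_add_distrib, Finset.sum_sub_distrib, ← Finset.mul_sum,
        Finset.sum_const, Finset.card_univ, Fintype.card_fin, nsmul_eq_mul]
      rw [hp1, ← hgbar, ← hx]
      field_simp
      ring
    have hcs : (x - gbar) ^ 2 ≤ (∑ i, (p i - 1 / (n:ℝ)) ^ 2) * V := by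
      rw [hdiff]
      exact Finset.sum_mul_sq_le_sq_mul_sq _ _ _
    have hpsum : ∑ i, (p i - 1 / (n:ℝ)) ^ 2
        = (1 / (n:ℝ)^2) * ∑ i, ((n:ℝ) * p i - 1) ^ 2 := by
      rw [Finset.mul_sum]
      apply Finset.sum_congr rfl
      intro i _
      field_simp
    have hple : ∑ i, (p i - 1 / (n:ℝ)) ^ 2 ≤ ρ / (n:ℝ) := by
      rw [hpsum]
      have h2 : ∑ i, ((n:ℝ) * p i - 1) ^ 2 ≤ (n:ℝ) * ρ := by
        have := hp2
        rw [div_mul_eq_mul_div, one_mul, div_le_iff₀ hN] at this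
        linarith [this]
      calc (1 / (n:ℝ)^2) * ∑ i, ((n:ℝ) * p i - 1) ^ 2
          ≤ (1 / (n:ℝ)^2) * ((n:ℝ) * ρ) := by
            apply mul_le_mul_of_nonneg_left h2; positivity
        _ = ρ / (n:ℝ) := by field_simp
    have hfin : (x - gbar) ^ 2 ≤ ρ * s ^ 2 := by
      calc (x - gbar) ^ 2 ≤ (∑ i, (p i - 1 / (n:ℝ)) ^ 2) * V := hcs
        _ ≤ (ρ / (n:ℝ)) * V := mul_le_mul_of_nonneg_right hple hV0
        _ = ρ * s ^ 2 := by rw [hVs]; field_simp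
    have : x - gbar ≤ Real.sqrt ρ * s := by
      have h1 : x - gbar ≤ |x - gbar| := le_abs_self _
      have h2 : |x - gbar| = Real.sqrt ((x - gbar) ^ 2) := (Real.sqrt_sq_eq_abs _).symm
      have h3 : Real.sqrt ((x - gbar) ^ 2) ≤ Real.sqrt (ρ * s ^ 2) :=
        Real.sqrt_le_sqrt hfin
      have h4 : Real.sqrt (ρ * s ^ 2) = Real.sqrt ρ * s := by
        rw [Real.sqrt_mul hρ, Real.sqrt_sq hs0]
      linarith
    linarith
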